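/- Let b be a globally bounded Lipschitz vector field on ℝ^d, fix t ∈ ℝ and let Φ be the flow of b. Then for every x ∈ ℝ^d and h ∈ ℝ, |Φ_t(x + h·b(x)) − Φ_{t+h}(x)| ≤ Lip(Φ_t) · Lip(b) · ‖b‖_∞ · h². -/

import Mathlib

open Set Filter

private lemma flow_growth {d : ℕ} (b : (Fin d → ℝ) → (Fin d → ℝ))
    (Φ : ℝ → (Fin d → ℝ) → (Fin d → ℝ))
    (C : ℝ) (hbound : ∀ x, ‖b x‖ ≤ C)
    (hΦ0 : ∀ x, Φ 0 x = x)
    (hODE : ∀ t x, HasDerivAt (fun s => Φ s x) (b (Φ t x)) t)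
    (s : ℝ) (x : Fin d → ℝ) : ‖Φ s x - x‖ ≤ C * |s| := by
  have := (convex_uIcc (0:ℝ) s).norm_image_sub_le_of_norm_hasDerivWithin_le
    (f := fun r => Φ r x) (f' := fun r => b (Φ r x)) (C := C)
    (fun r _ => (hODE r x).hasDerivWithinAt)
    (fun r _ => hbound _) (left_mem_uIcc) (right_mem_uIcc)
  simpa [hΦ0, Real.norm_eq_abs] using this

private lemma flow_basic_estimate {d : ℕ} (b : (Fin d → ℝ) → (Fin d → ℝ))
    (Φ : ℝ → (Fin d → ℝ) → (Fin d → ℝ))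
    (K : NNReal) (hLip : LipschitzWith K b)
    (C : ℝ) (hbound : ∀ x, ‖b x‖ ≤ C)
    (hΦ0 : ∀ x, Φ 0 x = x)
    (hODE : ∀ t x, HasDerivAt (fun s => Φ s x) (b (Φ t x)) t)
    (h : ℝ) (x : Fin d → ℝ) : ‖Φ h x - (x + h • b x)‖ ≤ (K : ℝ) * C * h ^ 2 := by
  have key := (convex_uIcc (0:ℝ) h).norm_image_sub_le_of_norm_hasDerivWithin_le
    (f := fun r => Φ r x - r • b x) (f' := fun r => b (Φ r x) - b x)
    (C := (K : ℝ) * C * |h|)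
    (fun r _ => ((hODE r x).sub ((hasDerivAt_id r).smul_const (b x) |>.congr_deriv
      (by simp))).hasDerivWithinAt)
    (fun r hr => by
      calc ‖b (Φ r x) - b x‖ ≤ (K : ℝ) * ‖Φ r x - x‖ := by
            simpa [dist_eq_norm] using hLip.dist_le_mul (Φ r x) x
        _ ≤ (K : ℝ) * (C * |r|) := by
            exact mul_le_mul_of_nonneg_left
              (flow_growth b Φ C hbound hΦ0 hODE r x) (K.coe_nonneg)
        _ ≤ (K : ℝ) * C * |h| := by
            rw [← mul_assoc]
            have hC : (0:ℝ) ≤ C := le_trans (norm_nonneg _) (hbound x)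
            have hrh : |r| ≤ |h| := abs_le.2
              ⟨le_trans (le_min (neg_nonpos.2 (abs_nonneg h)) (neg_abs_le h)) hr.1,
               hr.2.trans (max_le (abs_nonneg h) (le_abs_self h))⟩
            exact mul_le_mul_of_nonneg_left hrh (mul_nonneg K.coe_nonneg hC))
    (left_mem_uIcc) (right_mem_uIcc)
  calc ‖Φ h x - (x + h • b x)‖
      = ‖(fun r => Φ r x - r • b x) h - (fun r => Φ r x - r • b x) 0‖ := by
        simp [hΦ0]; congr 1; abel
    _ ≤ (K : ℝ) * C * |h| * ‖h - 0‖ := key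
    _ = (K : ℝ) * C * h ^ 2 := by
        rw [Real.norm_eq_abs, sub_zero, mul_assoc ((K : ℝ) * C), abs_mul_abs_self]; ring

private lemma flow_semigroup {d : ℕ} (b : (Fin d → ℝ) → (Fin d → ℝ))
    (Φ : ℝ → (Fin d → ℝ) → (Fin d → ℝ))
    (K : NNReal) (hLip : LipschitzWith K b)
    (hΦ0 : ∀ x, Φ 0 x = x)
    (hODE : ∀ t x, HasDerivAt (fun s => Φ s x) (b (Φ t x)) t)
    (t h : ℝ) (x : Fin d → ℝ) : Φ (t + h) x = Φ t (Φ h x) := by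
  have hv : ∀ s : ℝ, LipschitzOnWith K (fun y => b y) (univ : Set (Fin d → ℝ)) :=
    fun _ => hLip.lipschitzOnWith
  have ht : t ∈ Ioo (-(|t| + 1)) (|t| + 1) := by
    constructor <;> [nlinarith [abs_nonneg t, neg_abs_le t]; nlinarith [le_abs_self t]]
  have h0 : (0:ℝ) ∈ Ioo (-(|t| + 1)) (|t| + 1) := by
    constructor <;> nlinarith [abs_nonneg t]
  have hg : ∀ s : ℝ, HasDerivAt (fun s => Φ (s + h) x) (b (Φ (s + h) x)) s := by
    intro s
    have := (hODE (s + h) x).scomp s ((hasDerivAt_id s).add_const h)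
    simpa [Function.comp_def] using this
  have := ODE_solution_unique_of_mem_Ioo (v := fun _ y => b y)
    (s := fun _ => (univ : Set (Fin d → ℝ))) (fun s _ => hv s) h0
    (f := fun s => Φ (s + h) x) (g := fun s => Φ s (Φ h x))
    (fun s _ => ⟨hg s, trivial⟩)
    (fun s _ => ⟨hODE s (Φ h x), trivial⟩)
    (by simp [hΦ0])
  exact this ht

/-- **Quadratic closeness of `Φ t (x + h b(x))` and `Φ (t+h) x`.**
For a globally bounded Lipschitz vector field `b` with flow `Φ` and any fixed `t`,
`‖Φ t (x + h • b x) − Φ (t+h) x‖ ≤ Lip(Φ t) * Lip(b) * ‖b‖_∞ * h²` for all `x, h`. -/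
theorem flow_shift_quadratic_estimate
    {d : ℕ} (b : (Fin d → ℝ) → (Fin d → ℝ)) (Φ : ℝ → (Fin d → ℝ) → (Fin d → ℝ))
    (K : NNReal) (hLip : LipschitzWith K b)
    (C : ℝ) (hbound : ∀ x, ‖b x‖ ≤ C)
    (hΦ0 : ∀ x, Φ 0 x = x)
    (hODE : ∀ t x, HasDerivAt (fun s => Φ s x) (b (Φ t x)) t)
    (t : ℝ) (L : NNReal) (hLt : LipschitzWith L (Φ t)) :
    ∀ (x : Fin d → ℝ) (h : ℝ),
      ‖Φ t (x + h • b x) - Φ (t + h) x‖ ≤ (L : ℝ) * (K : ℝ) * C * h ^ 2 := by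
  intro x h
  rw [flow_semigroup b Φ K hLip hΦ0 hODE t h x]
  calc ‖Φ t (x + h • b x) - Φ t (Φ h x)‖
      ≤ (L : ℝ) * ‖(x + h • b x) - Φ h x‖ := by
        simpa [dist_eq_norm] using hLt.dist_le_mul (x + h • b x) (Φ h x)
    _ ≤ (L : ℝ) * ((K : ℝ) * C * h ^ 2) := by
        apply mul_le_mul_of_nonneg_left _ L.coe_nonneg
        rw [norm_sub_rev]
        exact flow_basic_estimate b Φ K hLip C hbound hΦ0 hODE h x
    _ = (L : ℝ) * (K : ℝ) * C * h ^ 2 := by ring
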